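/- Let (X, d) be a compact metric space and let E : X → ℝ be continuous and nonnegative. Given χ⁰ ∈ X and h > 0, let (χⁿ)_{n∈ℕ} be a sequence in X with initial value χ⁰ such that for every n ≥ 1, χⁿ minimizes the functional u ↦ (1/(2h))·d(u, χ^{n−1})² + E(u) over X. Define the piecewise constant interpolation χ(t) = χⁿ for t ∈ [nh, (n+1)h), and define the metric slope |∂E|(u) = limsup_{v → u, v ≠ u} (E(u) − E(v))₊ / d(u,v) ∈ [0,∞]. Then there exists a function u : [0,∞) → X such that: (i) for every n ∈ ℕ, E(χ(nh)) + (1/2)·∫₀^{nh} [ (1/h²)·d(χ(s+h), χ(s))² + |∂E|(u(s))² ] ds ≤ E(χ⁰); (ii) ∫₀^∞ (1/(2h²))·d(u(t), χ(t))² dt ≤ E(χ⁰); (iii) E(u(t)) ≤ E(χ(t)) for all t ≥ 0. -/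

import Mathlib

open MeasureTheory Filter Topology
open scoped ENNReal

/-- The metric slope `|∂E|(u) = limsup_{v → u, v ≠ u} (E(u) − E(v))₊ / d(u,v) ∈ [0,∞]`. -/
noncomputable def metricSlope {X : Type*} [MetricSpace X] (E : X → ℝ) (u : X) : ℝ≥0∞ :=
  Filter.limsup (fun v => ENNReal.ofReal (max (E u - E v) 0 / dist u v)) (𝓝[≠] u)

open Set

set_option maxHeartbeats 1000000

lemma exists_argmin {X : Type*} [MetricSpace X] [CompactSpace X] [Nonempty X]
    (E : X → ℝ) (hE : Continuous E) (y : X) (r : ℝ) :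
    ∃ w : X, ∀ v, 1/(2*r) * dist w y ^ 2 + E w ≤ 1/(2*r) * dist v y ^ 2 + E v := by
  have hc : Continuous (fun v : X => 1/(2*r) * dist v y ^ 2 + E v) := by
    apply Continuous.add _ hE
    exact continuous_const.mul ((continuous_id.dist continuous_const).pow 2)
  obtain ⟨w, -, hw⟩ := isCompact_univ.exists_isMinOn univ_nonempty hc.continuousOn
  exact ⟨w, fun v => hw (mem_univ v)⟩

lemma slope_le_of_min {X : Type*} [MetricSpace X] (E : X → ℝ) (y w : X) (r : ℝ) (hr : 0 < r)
    (hw : ∀ v, 1/(2*r) * dist w y ^ 2 + E w ≤ 1/(2*r) * dist v y ^ 2 + E v) :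
    metricSlope E w ≤ ENNReal.ofReal (dist w y / r) := by
  have h2r : (0:ℝ) < 2*r := by positivity
  have hb : ∀ v : X, v ≠ w →
      max (E w - E v) 0 / dist w v ≤ (dist v y + dist w y) / (2*r) := by
    intro v hv
    have hd : (0:ℝ) < dist w v := dist_pos.2 (Ne.symm hv)
    rcases le_or_gt (E w - E v) 0 with hle | hlt
    · rw [max_eq_right hle, zero_div]
      positivity
    · rw [max_eq_left hlt.le, div_le_div_iff₀ hd h2r]
      have h1 : E w - E v ≤ 1/(2*r) * (dist v y ^ 2 - dist w y ^ 2) := by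
        have := hw v; nlinarith [this]
      have h1' : (E w - E v) * (2*r) ≤ dist v y ^ 2 - dist w y ^ 2 := by
        have := mul_le_mul_of_nonneg_right h1 h2r.le
        calc (E w - E v) * (2*r) ≤ 1/(2*r) * (dist v y ^ 2 - dist w y ^ 2) * (2*r) := this
          _ = dist v y ^ 2 - dist w y ^ 2 := by field_simp
      have h2 : dist v y - dist w y ≤ dist w v := by
        have := abs_dist_sub_le v w y
        rw [abs_le] at this; rw [dist_comm v w] at this; linarith [this.2]
      have h3 : dist v y ^ 2 - dist w y ^ 2 ≤ (dist v y + dist w y) * dist w v := by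
        nlinarith [dist_nonneg (x := v) (y := y), dist_nonneg (x := w) (y := y)]
      linarith
  rcases eq_or_neBot (𝓝[≠] w) with hbot | hne
  · rw [metricSlope, hbot, Filter.limsup_bot]; exact bot_le
  · have hev : ∀ᶠ v in 𝓝[≠] w,
        ENNReal.ofReal (max (E w - E v) 0 / dist w v) ≤
          ENNReal.ofReal ((dist v y + dist w y) / (2*r)) := by
      filter_upwards [self_mem_nhdsWithin] with v hv
      exact ENNReal.ofReal_le_ofReal (hb v hv)
    have hlim : Filter.Tendsto (fun v => ENNReal.ofReal ((dist v y + dist w y) / (2*r)))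
        (𝓝[≠] w) (𝓝 (ENNReal.ofReal (dist w y / r))) := by
      have hc : Continuous (fun v : X => ENNReal.ofReal ((dist v y + dist w y) / (2*r))) :=
        ENNReal.continuous_ofReal.comp
          (((continuous_id.dist continuous_const).add continuous_const).div_const _)
      have := (hc.tendsto w).mono_left (nhdsWithin_le_nhds (s := {w}ᶜ))
      convert this using 2
      rw [eq_comm]; congr 1; field_simp; ring
    calc metricSlope E w ≤ Filter.limsup
          (fun v => ENNReal.ofReal ((dist v y + dist w y) / (2*r))) (𝓝[≠] w) :=
        Filter.limsup_le_limsup hev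
      _ = ENNReal.ofReal (dist w y / r) := hlim.limsup_eq

lemma dist_argmin_mono {X : Type*} [MetricSpace X] (E : X → ℝ) (y w1 w2 : X) (r1 r2 : ℝ)
    (h1 : 0 < r1) (h12 : r1 < r2)
    (hw1 : ∀ v, 1/(2*r1) * dist w1 y ^ 2 + E w1 ≤ 1/(2*r1) * dist v y ^ 2 + E v)
    (hw2 : ∀ v, 1/(2*r2) * dist w2 y ^ 2 + E w2 ≤ 1/(2*r2) * dist v y ^ 2 + E v) :
    dist w1 y ≤ dist w2 y := by
  have hA := hw1 w2; have hB := hw2 w1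
  have hc : 1/(2*r2) < 1/(2*r1) := by
    apply one_div_lt_one_div_of_lt <;> linarith
  have hsq : dist w1 y ^ 2 ≤ dist w2 y ^ 2 := by nlinarith
  exact (pow_le_pow_iff_left₀ dist_nonneg dist_nonneg two_ne_zero).1 hsq

/-- interval cover: any `x > a` lies in some `Ioc (a + j*Δ) (a + (j+1)*Δ)`. -/
lemma cover_lemma (a Δ x : ℝ) (hΔ : 0 < Δ) (hx : a < x) :
    ∃ j : ℕ, a + j*Δ < x ∧ x ≤ a + (j+1)*Δ := by
  set m := ⌈(x - a)/Δ⌉₊ with hm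
  have hpos : 0 < (x - a)/Δ := div_pos (by linarith) hΔ
  have hm1 : 1 ≤ m := by
    rw [hm, Nat.one_le_iff_ne_zero, Ne, Nat.ceil_eq_zero, not_le]; exact hpos
  refine ⟨m - 1, ?_, ?_⟩
  · have : ((m:ℝ) - 1) < (x - a)/Δ := by
      by_contra hcon
      push_neg at hcon
      have : (x-a)/Δ ≤ (m - 1 : ℕ) := by
        push_cast [Nat.cast_sub hm1] at hcon ⊢; linarith
      have := Nat.ceil_le.2 this
      omega
    have hml : ((m - 1 : ℕ) : ℝ) = (m:ℝ) - 1 := by push_cast [Nat.cast_sub hm1]; ring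
    rw [hml]
    calc a + ((m:ℝ)-1)*Δ < a + ((x-a)/Δ)*Δ := by
          have := mul_lt_mul_of_pos_right this hΔ; linarith
      _ = x := by field_simp; ring
  · have : (x - a)/Δ ≤ m := Nat.le_ceil _
    have hml : ((m - 1 : ℕ) : ℝ) + 1 = (m:ℝ) := by push_cast [Nat.cast_sub hm1]; ring
    rw [hml]
    calc x = a + ((x-a)/Δ)*Δ := by field_simp; ring
      _ ≤ a + (m:ℝ)*Δ := by nlinarith

lemma TL (f : ℝ → ℝ≥0∞) (hf : Measurable f) (c a b : ℝ) :
    ∫⁻ s in Ioo a b, f (s - c) = ∫⁻ r in Ioo (a - c) (b - c), f r := by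
  calc ∫⁻ s in Ioo a b, f (s - c) ∂volume
      = ∫⁻ s in Ioo a b, f (s - c) ∂(Measure.map (· + c) volume) := by
        rw [map_add_right_eq_self]
    _ = ∫⁻ r in (· + c) ⁻¹' (Ioo a b), f (r + c - c) ∂volume :=
        setLIntegral_map measurableSet_Ioo (hf.comp (measurable_id.sub_const c)) (measurable_add_const c)
    _ = ∫⁻ r in Ioo (a - c) (b - c), f r := by
        simp [preimage_add_const_Ioo]

lemma core (G ψ : ℝ → ℝ) (h K : ℝ) (hh : 0 < h)
    (hG : Monotone G) (hG0 : ∀ r, 0 ≤ G r)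
    (hkey : ∀ a b, 0 < a → a < b → b ≤ h → G a * (1/a - 1/b) ≤ ψ a - ψ b)
    (hψ : ∀ r, 0 < r → r ≤ h → ψ r ≤ K) :
    ∫⁻ r in Ioc (0:ℝ) h, ENNReal.ofReal (G r / r^2) ≤ ENNReal.ofReal (K - ψ h) := by
  set f : ℝ → ℝ≥0∞ := fun r => ENNReal.ofReal (G r / r^2) with hf
  have hfm : Measurable f :=
    (hG.measurable.div ((measurable_id.pow_const 2))).ennreal_ofReal
  set μ' : Measure ℝ := volume.withDensity f with hμ'
  have hμap : ∀ s : Set ℝ, MeasurableSet s → μ' s = ∫⁻ r in s, f r := fun s hs =>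
    withDensity_apply f hs
  -- single piece estimate
  have piece : ∀ a b : ℝ, 0 < a → a ≤ b →
      μ' (Ioc a b) ≤ ENNReal.ofReal (G b * (b - a) / a^2) := by
    intro a b ha hab
    rw [hμap _ measurableSet_Ioc]
    calc ∫⁻ r in Ioc a b, f r ≤ ∫⁻ _ in Ioc a b, ENNReal.ofReal (G b / a^2) := by
          apply setLIntegral_mono measurable_const
          intro x hx
          apply ENNReal.ofReal_le_ofReal
          apply div_le_div₀ (hG0 b) (hG hx.2) (by positivity)
          exact pow_le_pow_left₀ ha.le hx.1.le 2
      _ = ENNReal.ofReal (G b / a^2) * volume (Ioc a b) := setLIntegral_const _ _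
      _ = ENNReal.ofReal (G b * (b - a) / a^2) := by
          rw [Real.volume_Ioc, ← ENNReal.ofReal_mul (div_nonneg (hG0 b) (by positivity))]
          congr 1; ring
  -- estimate on Ioc e h
  have step : ∀ e : ℝ, 0 < e → e < h → μ' (Ioc e h) ≤ ENNReal.ofReal (K - ψ h) := by
    intro e he heh
    set C : ℝ := (h - e) * (G h * h) / e^3 with hC
    have htend : Tendsto (fun N : ℕ => ENNReal.ofReal ((K - ψ h) + C / N)) atTop
        (𝓝 (ENNReal.ofReal (K - ψ h))) := by
      have : Tendsto (fun N : ℕ => (K - ψ h) + C / N) atTop (𝓝 ((K - ψ h) + 0)) :=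
        tendsto_const_nhds.add (tendsto_const_div_atTop_nhds_zero_nat C)
      rw [add_zero] at this
      exact (ENNReal.continuous_ofReal.tendsto _).comp this
    refine ge_of_tendsto htend ?_
    filter_upwards [eventually_ge_atTop 1] with N hN1
    have hNpos : (0:ℝ) < N := by exact_mod_cast hN1
    set Δ : ℝ := (h - e) / N with hΔdef
    have hΔ : 0 < Δ := div_pos (by linarith) hNpos
    set rr : ℕ → ℝ := fun j => e + j * Δ with hrr
    have hrN : rr N = h := by
      simp only [hrr, hΔdef]; field_simp; ring
    have hrpos : ∀ j : ℕ, 0 < rr j := by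
      intro j; have : (0:ℝ) ≤ j * Δ := by positivity
      simp only [hrr]; linarith
    have hrlt : ∀ j : ℕ, rr j < rr (j+1) := by
      intro j; simp only [hrr]; push_cast; nlinarith
    have hrle : ∀ j : ℕ, j ≤ N → rr j ≤ h := by
      intro j hj
      rw [← hrN]; simp only [hrr]
      have : (j:ℝ) ≤ N := by exact_mod_cast hj
      nlinarith
    have hre : ∀ j : ℕ, e ≤ rr j := by
      intro j; have : (0:ℝ) ≤ j * Δ := by positivity
      simp only [hrr]; linarith
    -- cover
    have hcover : Ioc e h ⊆ ⋃ j ∈ Finset.range N, Ioc (rr j) (rr (j+1)) := by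
      intro x hx
      obtain ⟨j, hj1, hj2⟩ := cover_lemma e Δ x hΔ hx.1
      have hjN : j < N := by
        by_contra hcon
        push_neg at hcon
        have : rr N ≤ rr j := by
          simp only [hrr]
          have : (N:ℝ) ≤ j := by exact_mod_cast hcon
          nlinarith
        rw [hrN] at this
        have : h < x := lt_of_le_of_lt this hj1
        exact absurd hx.2 (not_le.2 this)
      simp only [mem_iUnion, Finset.mem_range]
      refine ⟨j, hjN, ?_, ?_⟩
      · simpa [hrr] using hj1
      · simp only [hrr]; push_cast; linarith [hj2]
    -- real sum estimate
    have hsum_real : ∑ j ∈ Finset.range N, G (rr (j+1)) * Δ / (rr j)^2 ≤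
        (K - ψ h) + C / N := by
      have hterm : ∀ j ∈ Finset.range N,
          G (rr (j+1)) * Δ / (rr j)^2 ≤
            (ψ (rr j) - ψ (rr (j+1)))
              + (G (rr (j+1)) * rr (j+1) - G (rr j) * rr j) * (Δ / e^3) := by
        intro j hj
        rw [Finset.mem_range] at hj
        have h1 : rr (j+1) ≤ h := hrle _ (by omega)
        have hkj := hkey (rr j) (rr (j+1)) (hrpos j) (hrlt j) h1
        have hinv : 1/(rr j) - 1/(rr (j+1)) = Δ / (rr j * rr (j+1)) := by
          have hd : rr (j+1) - rr j = Δ := by simp only [hrr]; push_cast; ring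
          rw [div_sub_div _ _ (hrpos j).ne' (hrpos (j+1)).ne']; congr 1; linarith [hd]
        rw [hinv] at hkj
        -- gap estimate
        have hgap : G (rr (j+1)) * Δ / (rr j)^2 - G (rr j) * (Δ / (rr j * rr (j+1))) ≤
            (G (rr (j+1)) * rr (j+1) - G (rr j) * rr j) * (Δ / e^3) := by
          have hmd : 0 ≤ G (rr (j+1)) * rr (j+1) - G (rr j) * rr j := by
            have := mul_le_mul (hG (hrlt j).le) (hrlt j).le (hrpos j).le (hG0 _)
            linarith
          have hden : e^3 ≤ (rr j)^2 * rr (j+1) := by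
            have h1 := hre j; have h2 := hre (j+1)
            have hee : e*e ≤ rr j * rr j := by nlinarith [hrpos j]
            have : (e*e)*e ≤ (rr j * rr j) * rr (j+1) :=
              mul_le_mul hee h2 he.le (by nlinarith [hrpos j])
            nlinarith
          have heq : G (rr (j+1)) * Δ / (rr j)^2 - G (rr j) * (Δ / (rr j * rr (j+1))) =
              (G (rr (j+1)) * rr (j+1) - G (rr j) * rr j) * (Δ / ((rr j)^2 * rr (j+1))) := by
            have hn1 := (hrpos j).ne'; have hn2 := (hrpos (j+1)).ne'
            field_simp
          rw [heq]
          apply mul_le_mul_of_nonneg_left _ hmd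
          apply div_le_div_of_nonneg_left hΔ.le (by positivity) hden
        linarith
      calc ∑ j ∈ Finset.range N, G (rr (j+1)) * Δ / (rr j)^2
          ≤ ∑ j ∈ Finset.range N, ((ψ (rr j) - ψ (rr (j+1)))
              + (G (rr (j+1)) * rr (j+1) - G (rr j) * rr j) * (Δ / e^3)) :=
            Finset.sum_le_sum hterm
        _ = (ψ (rr 0) - ψ (rr N)) + (G (rr N) * rr N - G (rr 0) * rr 0) * (Δ / e^3) := by
            rw [Finset.sum_add_distrib, Finset.sum_range_sub' (fun j => ψ (rr j)),
              ← Finset.sum_mul, Finset.sum_range_sub (fun j => G (rr j) * rr j)]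
        _ ≤ (K - ψ h) + C / N := by
            have hr0 : rr 0 = e := by rw [hrr]; simp
            rw [hr0, hrN]
            have h1 : ψ e ≤ K := hψ e he heh.le
            have h2 : 0 ≤ G e * e := mul_nonneg (hG0 e) he.le
            have h3 : (G h * h - G e * e) * (Δ / e^3) ≤ C / N := by
              rw [hC, hΔdef]
              have hGh : 0 ≤ G h * h := mul_nonneg (hG0 h) hh.le
              have : (G h * h - G e * e) ≤ G h * h := by linarith
              calc (G h * h - G e * e) * ((h - e)/N / e^3)
                  ≤ G h * h * ((h - e)/N / e^3) := by
                    apply mul_le_mul_of_nonneg_right this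
                    positivity
                _ = (h - e) * (G h * h) / e^3 / N := by ring
            linarith
    -- assemble
    calc μ' (Ioc e h) ≤ μ' (⋃ j ∈ Finset.range N, Ioc (rr j) (rr (j+1))) :=
          measure_mono hcover
      _ ≤ ∑ j ∈ Finset.range N, μ' (Ioc (rr j) (rr (j+1))) :=
          measure_biUnion_finset_le _ _
      _ ≤ ∑ j ∈ Finset.range N, ENNReal.ofReal (G (rr (j+1)) * (rr (j+1) - rr j) / (rr j)^2) :=
          Finset.sum_le_sum (fun j _ => piece _ _ (hrpos j) (hrlt j).le)
      _ = ENNReal.ofReal (∑ j ∈ Finset.range N, G (rr (j+1)) * (rr (j+1) - rr j) / (rr j)^2) := by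
          rw [ENNReal.ofReal_sum_of_nonneg]
          intro j _
          exact div_nonneg (mul_nonneg (hG0 _) (by linarith [hrlt j])) (by positivity)
      _ ≤ ENNReal.ofReal ((K - ψ h) + C / N) := by
          apply ENNReal.ofReal_le_ofReal
          have hd : ∀ j : ℕ, rr (j+1) - rr j = Δ := by
            intro j; simp only [hrr]; push_cast; ring
          calc ∑ j ∈ Finset.range N, G (rr (j+1)) * (rr (j+1) - rr j) / (rr j)^2
              = ∑ j ∈ Finset.range N, G (rr (j+1)) * Δ / (rr j)^2 := by
                apply Finset.sum_congr rfl; intro j _; rw [hd j]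
            _ ≤ (K - ψ h) + C / N := hsum_real
  -- pass to the limit e → 0
  have hunion : Ioc (0:ℝ) h = ⋃ n : ℕ, Ioc (h/(n+2)) h := by
    ext x
    simp only [mem_Ioc, mem_iUnion]
    constructor
    · rintro ⟨hx0, hxh⟩
      obtain ⟨n, hn⟩ := exists_nat_gt (h/x)
      refine ⟨n, ?_, hxh⟩
      rw [div_lt_iff₀ (by positivity)]
      rw [div_lt_iff₀ hx0] at hn
      nlinarith
    · rintro ⟨n, hn1, hn2⟩
      have : (0:ℝ) < h/(n+2) := by positivity
      exact ⟨lt_trans this hn1, hn2⟩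
  have hmono : Monotone (fun n : ℕ => Ioc (h/(n+2)) h) := by
    intro m n hmn
    apply Ioc_subset_Ioc_left
    apply div_le_div_of_nonneg_left hh.le (by positivity)
    have : (m:ℝ) ≤ n := Nat.cast_le.2 hmn
    linarith
  rw [← hμap _ measurableSet_Ioc, hunion, hmono.measure_iUnion]
  apply iSup_le
  intro n
  apply step
  · positivity
  · rw [div_lt_iff₀ (by positivity)]
    nlinarith


/-- De Giorgi's interpolation lemma for minimizing movements on a compact
metric space. -/
theorem stmt_7 {X : Type*} [MetricSpace X] [CompactSpace X]
    (E : X → ℝ) (hE : Continuous E) (hE0 : ∀ x, 0 ≤ E x)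
    (h : ℝ) (hh : 0 < h) (χ : ℕ → X)
    (hmin : ∀ n : ℕ, 1 ≤ n → ∀ v : X,
      1 / (2 * h) * dist (χ n) (χ (n - 1)) ^ 2 + E (χ n) ≤
        1 / (2 * h) * dist v (χ (n - 1)) ^ 2 + E v) :
    ∃ u : ℝ → X,
      -- (i) De Giorgi's inequality for the piecewise constant interpolation
      (∀ n : ℕ,
        ENNReal.ofReal (E (χ n)) +
          (1 / 2) * ∫⁻ s in Set.Ioc (0 : ℝ) (n * h),
            (ENNReal.ofReal (1 / h ^ 2 * dist (χ ⌊(s + h) / h⌋₊) (χ ⌊s / h⌋₊) ^ 2) +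
              metricSlope E (u s) ^ 2) ≤ ENNReal.ofReal (E (χ 0))) ∧
      -- (ii) the interpolation `u` stays close to the piecewise constant one
      (∫⁻ t in Set.Ioi (0 : ℝ),
          ENNReal.ofReal (1 / (2 * h ^ 2) * dist (u t) (χ ⌊t / h⌋₊) ^ 2) ≤
        ENNReal.ofReal (E (χ 0))) ∧
      -- (iii) energy comparison
      (∀ t : ℝ, 0 ≤ t → E (u t) ≤ E (χ ⌊t / h⌋₊)) := by
  haveI : Nonempty X := ⟨χ 0⟩
  obtain ⟨sel, hsel⟩ : ∃ sel : X → ℝ → X, ∀ y r v,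
      1/(2*r) * dist (sel y r) y ^ 2 + E (sel y r) ≤ 1/(2*r) * dist v y ^ 2 + E v := by
    choose sel hsel using fun (y : X) (r : ℝ) => exists_argmin E hE y r
    exact ⟨sel, hsel⟩
  -- the minimality hypothesis, reindexed
  have hχmin : ∀ k : ℕ, ∀ v, 1/(2*h) * dist (χ (k+1)) (χ k) ^ 2 + E (χ (k+1)) ≤
      1/(2*h) * dist v (χ k) ^ 2 + E v := by
    intro k v
    have := hmin (k+1) (Nat.le_add_left 1 k) v
    simpa using this
  have hEdec : ∀ k : ℕ, E (χ (k+1)) ≤ E (χ k) := by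
    intro k
    have := hχmin k (χ k)
    simp [dist_self] at this
    have h0 : 0 ≤ h⁻¹ * 2⁻¹ * dist (χ (k+1)) (χ k) ^ 2 := by positivity
    linarith
  have hEanti : ∀ n : ℕ, E (χ n) ≤ E (χ 0) :=
    fun n => antitone_nat_of_succ_le (f := fun n => E (χ n)) hEdec (Nat.zero_le n)
  -- energy at selected points
  have hselE : ∀ (y : X) (r : ℝ), 0 < r → E (sel y r) ≤ E y := by
    intro y r hr
    have := hsel y r y
    rw [dist_self] at this
    have h0 : 0 ≤ 1/(2*r) * dist (sel y r) y ^ 2 := by positivity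
    nlinarith
  -- the interpolant
  set u : ℝ → X := fun t =>
    if t ≤ (⌊t/h⌋₊ : ℝ) * h then χ ⌊t/h⌋₊ else sel (χ ⌊t/h⌋₊) (t - ⌊t/h⌋₊ * h) with hu
  -- floor identities
  have hfl : ∀ (k : ℕ) (s : ℝ), (k:ℝ)*h < s → s < ((k:ℝ)+1)*h → ⌊s/h⌋₊ = k := by
    intro k s h1 h2
    have hkh : (0:ℝ) ≤ (k:ℝ)*h := by positivity
    have hs : 0 < s := lt_of_le_of_lt hkh h1
    have hs0 : 0 ≤ s/h := by positivity
    rw [Nat.floor_eq_iff hs0]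
    constructor
    · rw [le_div_iff₀ hh]; linarith
    · rw [div_lt_iff₀ hh]; push_cast; linarith
  have hu_on : ∀ (k : ℕ) (s : ℝ), (k:ℝ)*h < s → s < ((k:ℝ)+1)*h →
      u s = sel (χ k) (s - k*h) ∧ ⌊s/h⌋₊ = k := by
    intro k s h1 h2
    have hf := hfl k s h1 h2
    constructor
    · rw [hu]
      simp only [hf]
      rw [if_neg (by linarith)]
    · exact hf

  -- discrete data
  set G : ℕ → ℝ → ℝ := fun k r =>
    if r ≤ 0 then 0 else if r < h then dist (sel (χ k) r) (χ k) ^ 2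
      else dist (χ (k+1)) (χ k) ^ 2 with hGdef
  set φ : ℕ → ℝ → ℝ := fun k r =>
    1/(2*r) * dist (sel (χ k) r) (χ k) ^ 2 + E (sel (χ k) r) with hφdef
  have hG0 : ∀ k r, 0 ≤ G k r := by
    intro k r
    simp only [hGdef]
    split_ifs <;> positivity
  have hGd : ∀ k r, 0 < r → r < h → G k r = dist (sel (χ k) r) (χ k) ^ 2 := by
    intro k r h1 h2
    simp only [hGdef]
    rw [if_neg (by linarith), if_pos h2]
  have hGmono : ∀ k, Monotone (G k) := by
    intro k r1 r2 h12
    rcases le_or_gt r1 0 with hr1 | hr1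
    · have : G k r1 = 0 := by simp only [hGdef]; rw [if_pos hr1]
      rw [this]; exact hG0 k r2
    · have hr2 : 0 < r2 := lt_of_lt_of_le hr1 h12
      rcases lt_or_ge r1 h with hr1h | hr1h
      · rcases lt_or_ge r2 h with hr2h | hr2h
        · rcases eq_or_lt_of_le h12 with heq | hlt
          · rw [heq]
          · rw [hGd k r1 hr1 hr1h, hGd k r2 hr2 hr2h]
            have := dist_argmin_mono E (χ k) (sel (χ k) r1) (sel (χ k) r2) r1 r2 hr1 hlt
              (hsel (χ k) r1) (hsel (χ k) r2)
            exact pow_le_pow_left₀ dist_nonneg this 2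
        · have hG2 : G k r2 = dist (χ (k+1)) (χ k) ^ 2 := by
            simp only [hGdef]; rw [if_neg (by linarith), if_neg (by linarith)]
          rw [hGd k r1 hr1 hr1h, hG2]
          have := dist_argmin_mono E (χ k) (sel (χ k) r1) (χ (k+1)) r1 h hr1 hr1h
            (hsel (χ k) r1) (hχmin k)
          exact pow_le_pow_left₀ dist_nonneg this 2
      · have hG1 : G k r1 = dist (χ (k+1)) (χ k) ^ 2 := by
          simp only [hGdef]; rw [if_neg (by linarith), if_neg (by linarith)]
        have hG2 : G k r2 = dist (χ (k+1)) (χ k) ^ 2 := by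
          simp only [hGdef]; rw [if_neg (by linarith), if_neg (by linarith)]
        rw [hG1, hG2]
  have hkey : ∀ k a b, 0 < a → a < b → b ≤ h →
      G k a * (1/(2*a) - 1/(2*b)) ≤ φ k a - φ k b := by
    intro k a b ha hab hbh
    rw [hGd k a ha (lt_of_lt_of_le hab hbh)]
    simp only [hφdef]
    have h1 := hsel (χ k) b (sel (χ k) a)
    nlinarith [h1]
  have hφle : ∀ k r, 0 < r → φ k r ≤ E (χ k) := by
    intro k r hr
    have := hsel (χ k) r (χ k)
    rw [dist_self] at this
    simp only [hφdef]
    nlinarith [this]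
  have hφh : ∀ k, 1/(2*h) * dist (χ (k+1)) (χ k) ^ 2 + E (χ (k+1)) ≤ φ k h :=
    fun k => hχmin k (sel (χ k) h)
  have hφhE : ∀ k, E (χ (k+1)) ≤ φ k h := by
    intro k
    have h0 : 0 ≤ 1/(2*h) * dist (χ (k+1)) (χ k) ^ 2 := by positivity
    exact le_trans (le_add_of_nonneg_left h0) (hφh k)
  have hfm : ∀ k, Measurable (fun r => ENNReal.ofReal (G k r / r^2)) := fun k =>
    ((hGmono k).measurable.div ((measurable_id.pow_const 2))).ennreal_ofReal
  have hfm2 : ∀ k, Measurable (fun r => ENNReal.ofReal ((G k r / 2) / r^2)) := fun k =>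
    (((hGmono k).measurable.div_const 2).div ((measurable_id.pow_const 2))).ennreal_ofReal
  have hcoreA : ∀ k, ∫⁻ r in Set.Ioc (0:ℝ) h, ENNReal.ofReal (G k r / r^2) ≤
      ENNReal.ofReal (2*E (χ k) - 2*φ k h) := by
    intro k
    apply core (G k) (fun r => 2*φ k r) h (2*E (χ k)) hh (hGmono k) (hG0 k)
    · intro a b ha hab hbh
      have h1 := hkey k a b ha hab hbh
      have h2 : G k a * (1/a - 1/b) = 2*(G k a * (1/(2*a) - 1/(2*b))) := by ring
      linarith
    · intro r hr hrh
      have := hφle k r hr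
      linarith
  have hcoreB : ∀ k, ∫⁻ r in Set.Ioc (0:ℝ) h, ENNReal.ofReal ((G k r / 2) / r^2) ≤
      ENNReal.ofReal (E (χ k) - φ k h) := by
    intro k
    apply core (fun r => G k r / 2) (φ k) h (E (χ k)) hh
      (fun r1 r2 h12 => by have := hGmono k h12; simp only []; linarith)
      (fun r => by have := hG0 k r; positivity)
    · intro a b ha hab hbh
      have h1 := hkey k a b ha hab hbh
      have h2 : G k a / 2 * (1/a - 1/b) = G k a * (1/(2*a) - 1/(2*b)) := by ring
      linarith
    · exact fun r hr _ => hφle k r hr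
  -- slope bound on the open intervals
  have hslope : ∀ (k : ℕ) (s : ℝ), (k:ℝ)*h < s → s < ((k:ℝ)+1)*h →
      metricSlope E (u s) ^ 2 ≤ ENNReal.ofReal (G k (s - k*h) / (s - k*h)^2) := by
    intro k s h1 h2
    obtain ⟨hus, -⟩ := hu_on k s h1 h2
    rw [hus]
    have hr1 : 0 < s - k*h := by linarith
    have hr2 : s - k*h < h := by linarith
    have hsl := slope_le_of_min E (χ k) (sel (χ k) (s - k*h)) (s - k*h) hr1
      (hsel (χ k) (s - k*h))
    calc metricSlope E (sel (χ k) (s - k*h)) ^ 2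
        ≤ ENNReal.ofReal (dist (sel (χ k) (s - k*h)) (χ k) / (s - k*h)) ^ 2 :=
          pow_le_pow_left' hsl 2
      _ = ENNReal.ofReal ((dist (sel (χ k) (s - k*h)) (χ k) / (s - k*h))^2) :=
          (ENNReal.ofReal_pow (by positivity) 2).symm
      _ = ENNReal.ofReal (G k (s - k*h) / (s - k*h)^2) := by
          rw [hGd k _ hr1 hr2, div_pow]
  -- translation identities
  have htransA : ∀ k : ℕ, ∫⁻ s in Set.Ioo ((k:ℝ)*h) (((k:ℝ)+1)*h),
      ENNReal.ofReal (G k (s - k*h) / (s - k*h)^2) ≤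
        ENNReal.ofReal (2*E (χ k) - 2*φ k h) := by
    intro k
    rw [TL _ (hfm k) ((k:ℝ)*h), show (k:ℝ)*h - k*h = 0 by ring,
      show ((k:ℝ)+1)*h - k*h = h by ring,
      Measure.restrict_congr_set Ioo_ae_eq_Ioc]
    exact hcoreA k
  have htransB : ∀ k : ℕ, ∫⁻ s in Set.Ioo ((k:ℝ)*h) (((k:ℝ)+1)*h),
      ENNReal.ofReal ((G k (s - k*h) / 2) / (s - k*h)^2) ≤
        ENNReal.ofReal (E (χ k) - φ k h) := by
    intro k
    rw [TL _ (hfm2 k) ((k:ℝ)*h), show (k:ℝ)*h - k*h = 0 by ring,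
      show ((k:ℝ)+1)*h - k*h = h by ring,
      Measure.restrict_congr_set Ioo_ae_eq_Ioc]
    exact hcoreB k
  -- per interval bound for (i)
  have hAk : ∀ k : ℕ, (∫⁻ s in Set.Ioc ((k:ℝ)*h) (((k:ℝ)+1)*h),
      (ENNReal.ofReal (1 / h ^ 2 * dist (χ ⌊(s + h) / h⌋₊) (χ ⌊s / h⌋₊) ^ 2) +
        metricSlope E (u s) ^ 2))
      ≤ ENNReal.ofReal (2*(E (χ k) - E (χ (k+1)))) := by
    intro k
    rw [← Measure.restrict_congr_set (Ioo_ae_eq_Ioc (a := (k:ℝ)*h) (b := ((k:ℝ)+1)*h))]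
    have hmono1 : Measurable (fun s : ℝ =>
        ENNReal.ofReal (1 / h ^ 2 * dist (χ (k+1)) (χ k) ^ 2) +
          ENNReal.ofReal (G k (s - k*h) / (s - k*h)^2)) :=
      measurable_const.add ((hfm k).comp (measurable_id.sub_const _))
    calc ∫⁻ s in Set.Ioo ((k:ℝ)*h) (((k:ℝ)+1)*h),
          (ENNReal.ofReal (1 / h ^ 2 * dist (χ ⌊(s + h) / h⌋₊) (χ ⌊s / h⌋₊) ^ 2) +
            metricSlope E (u s) ^ 2)
        ≤ ∫⁻ s in Set.Ioo ((k:ℝ)*h) (((k:ℝ)+1)*h),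
            (ENNReal.ofReal (1 / h ^ 2 * dist (χ (k+1)) (χ k) ^ 2) +
              ENNReal.ofReal (G k (s - k*h) / (s - k*h)^2)) := by
          apply setLIntegral_mono hmono1
          intro s hs
          obtain ⟨hs1, hs2⟩ := hs
          have hfl1 : ⌊s/h⌋₊ = k := hfl k s hs1 hs2
          have hfl2 : ⌊(s+h)/h⌋₊ = k+1 := by
            have := hfl (k+1) (s+h) (by push_cast; linarith) (by push_cast; linarith)
            simpa using this
          rw [hfl1, hfl2]
          exact add_le_add le_rfl (hslope k s hs1 hs2)
      _ = (∫⁻ _ in Set.Ioo ((k:ℝ)*h) (((k:ℝ)+1)*h),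
            ENNReal.ofReal (1 / h ^ 2 * dist (χ (k+1)) (χ k) ^ 2)) +
          ∫⁻ s in Set.Ioo ((k:ℝ)*h) (((k:ℝ)+1)*h),
            ENNReal.ofReal (G k (s - k*h) / (s - k*h)^2) :=
          lintegral_add_left measurable_const _
      _ ≤ ENNReal.ofReal (1 / h ^ 2 * dist (χ (k+1)) (χ k) ^ 2) * ENNReal.ofReal h +
          ENNReal.ofReal (2*E (χ k) - 2*φ k h) := by
          apply add_le_add
          · rw [setLIntegral_const, Real.volume_Ioo,
              show ((k:ℝ)+1)*h - (k:ℝ)*h = h by ring]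
          · exact htransA k
      _ ≤ ENNReal.ofReal (2*(E (χ k) - E (χ (k+1)))) := by
          rw [← ENNReal.ofReal_mul (by positivity),
            ← ENNReal.ofReal_add (by positivity) ?_]
          · apply ENNReal.ofReal_le_ofReal
            have hid : 1 / h ^ 2 * dist (χ (k+1)) (χ k) ^ 2 * h =
                2 * (1/(2*h) * dist (χ (k+1)) (χ k) ^ 2) := by
              field_simp
            have := hφh k
            nlinarith [this]
          · have := hφle k h hh
            linarith
  -- per interval bound for (ii)
  have hBk : ∀ k : ℕ, (∫⁻ t in Set.Ioc ((k:ℝ)*h) (((k:ℝ)+1)*h),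
      ENNReal.ofReal (1 / (2 * h ^ 2) * dist (u t) (χ ⌊t / h⌋₊) ^ 2))
      ≤ ENNReal.ofReal (E (χ k) - E (χ (k+1))) := by
    intro k
    rw [← Measure.restrict_congr_set (Ioo_ae_eq_Ioc (a := (k:ℝ)*h) (b := ((k:ℝ)+1)*h))]
    calc ∫⁻ t in Set.Ioo ((k:ℝ)*h) (((k:ℝ)+1)*h),
          ENNReal.ofReal (1 / (2 * h ^ 2) * dist (u t) (χ ⌊t / h⌋₊) ^ 2)
        ≤ ∫⁻ t in Set.Ioo ((k:ℝ)*h) (((k:ℝ)+1)*h),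
            ENNReal.ofReal ((G k (t - k*h) / 2) / (t - k*h)^2) := by
          have hmono2 : Measurable (fun t : ℝ =>
              ENNReal.ofReal ((G k (t - k*h) / 2) / (t - k*h)^2)) :=
            (hfm2 k).comp (measurable_id.sub_const _)
          apply setLIntegral_mono hmono2
          intro t ht
          obtain ⟨ht1, ht2⟩ := ht
          obtain ⟨hut, hft⟩ := hu_on k t ht1 ht2
          rw [hut, hft]
          apply ENNReal.ofReal_le_ofReal
          have hr1 : 0 < t - k*h := by linarith
          have hr2 : t - k*h < h := by linarith
          rw [← hGd k _ hr1 hr2]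
          have hg := hG0 k (t - k*h)
          have e1 : 1/(2*h^2) * G k (t-k*h) = G k (t-k*h) / (2*h^2) := by ring
          have e2 : (G k (t-k*h)/2)/(t-k*h)^2 = G k (t-k*h) / (2*(t-k*h)^2) :=
            div_div _ 2 _
          rw [e1, e2]
          exact div_le_div_of_nonneg_left hg (by positivity) (by nlinarith)
      _ ≤ ENNReal.ofReal (E (χ k) - φ k h) := htransB k
      _ ≤ ENNReal.ofReal (E (χ k) - E (χ (k+1))) := by
          apply ENNReal.ofReal_le_ofReal
          have := hφhE k
          linarith
  refine ⟨u, ?_, ?_, ?_⟩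
  · -- (i)
    intro n
    have hIle : (∫⁻ s in Set.Ioc (0:ℝ) (n*h),
        (ENNReal.ofReal (1 / h ^ 2 * dist (χ ⌊(s + h) / h⌋₊) (χ ⌊s / h⌋₊) ^ 2) +
          metricSlope E (u s) ^ 2)) ≤ ENNReal.ofReal (2*E (χ 0) - 2*E (χ n)) := by
      set sets : ℕ → Set ℝ := fun k =>
        Set.Ioc ((k:ℝ)*h) (((k:ℝ)+1)*h) ∩ Set.Ioc 0 ((n:ℝ)*h) with hsets
      have hsub : Set.Ioc (0:ℝ) ((n:ℝ)*h) ⊆ ⋃ k, sets k := by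
        intro t ht
        obtain ⟨j, hj1, hj2⟩ := cover_lemma 0 h t hh ht.1
        refine Set.mem_iUnion.2 ⟨j, ⟨⟨by linarith [hj1], by linarith [hj2]⟩, ht⟩⟩
      calc (∫⁻ s in Set.Ioc (0:ℝ) (n*h),
            (ENNReal.ofReal (1 / h ^ 2 * dist (χ ⌊(s + h) / h⌋₊) (χ ⌊s / h⌋₊) ^ 2) +
              metricSlope E (u s) ^ 2))
          ≤ ∫⁻ s in ⋃ k, sets k,
            (ENNReal.ofReal (1 / h ^ 2 * dist (χ ⌊(s + h) / h⌋₊) (χ ⌊s / h⌋₊) ^ 2) +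
              metricSlope E (u s) ^ 2) := lintegral_mono_set hsub
        _ ≤ ∑' k, ∫⁻ s in sets k,
            (ENNReal.ofReal (1 / h ^ 2 * dist (χ ⌊(s + h) / h⌋₊) (χ ⌊s / h⌋₊) ^ 2) +
              metricSlope E (u s) ^ 2) := lintegral_iUnion_le _ _
        _ ≤ ∑' k, (if k < n then ENNReal.ofReal (2*(E (χ k) - E (χ (k+1)))) else 0) := by
            apply ENNReal.tsum_le_tsum
            intro k
            by_cases hk : k < n
            · rw [if_pos hk]
              exact le_trans (lintegral_mono_set Set.inter_subset_left) (hAk k)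
            · rw [if_neg hk]
              have hempty : sets k = ∅ := by
                apply Set.eq_empty_of_forall_notMem
                rintro t ⟨⟨h1, -⟩, ⟨-, h4⟩⟩
                push_neg at hk
                have hnk : (n:ℝ) ≤ k := Nat.cast_le.2 hk
                have : (n:ℝ)*h ≤ (k:ℝ)*h := by nlinarith
                linarith
              rw [hempty]
              simp
        _ = ∑ k ∈ Finset.range n, ENNReal.ofReal (2*(E (χ k) - E (χ (k+1)))) := by
            rw [tsum_eq_sum (s := Finset.range n)
              (fun k hk => if_neg (fun hc => hk (Finset.mem_range.2 hc)))]
            exact Finset.sum_congr rfl (fun k hk => if_pos (Finset.mem_range.1 hk))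
        _ = ENNReal.ofReal (∑ k ∈ Finset.range n, 2*(E (χ k) - E (χ (k+1)))) := by
            rw [ENNReal.ofReal_sum_of_nonneg]
            intro k _
            have := hEdec k
            linarith
        _ = ENNReal.ofReal (2*E (χ 0) - 2*E (χ n)) := by
            congr 1
            calc ∑ k ∈ Finset.range n, 2*(E (χ k) - E (χ (k+1)))
                = ∑ k ∈ Finset.range n,
                    ((fun m => 2*E (χ m)) k - (fun m => 2*E (χ m)) (k+1)) := by
                  exact Finset.sum_congr rfl (fun k _ => by ring)
              _ = 2*E (χ 0) - 2*E (χ n) := Finset.sum_range_sub' (fun m => 2*E (χ m)) n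
    have hhalf : (1/2 : ℝ≥0∞) * ENNReal.ofReal (2*E (χ 0) - 2*E (χ n)) =
        ENNReal.ofReal (E (χ 0) - E (χ n)) := by
      rw [show (2*E (χ 0) - 2*E (χ n)) = 2*(E (χ 0) - E (χ n)) by ring,
        ENNReal.ofReal_mul (by norm_num : (0:ℝ) ≤ 2), ← mul_assoc,
        ENNReal.ofReal_ofNat, one_div,
        ENNReal.inv_mul_cancel (by norm_num) (by norm_num), one_mul]
    calc ENNReal.ofReal (E (χ n)) + (1/2) * ∫⁻ s in Set.Ioc (0:ℝ) (n*h),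
          (ENNReal.ofReal (1 / h ^ 2 * dist (χ ⌊(s + h) / h⌋₊) (χ ⌊s / h⌋₊) ^ 2) +
            metricSlope E (u s) ^ 2)
        ≤ ENNReal.ofReal (E (χ n)) + (1/2) * ENNReal.ofReal (2*E (χ 0) - 2*E (χ n)) :=
          add_le_add le_rfl (mul_le_mul' le_rfl hIle)
      _ = ENNReal.ofReal (E (χ n)) + ENNReal.ofReal (E (χ 0) - E (χ n)) := by rw [hhalf]
      _ = ENNReal.ofReal (E (χ 0)) := by
          rw [← ENNReal.ofReal_add (hE0 _) (by linarith [hEanti n])]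
          congr 1
          ring
  · -- (ii)
    have hsub : Set.Ioi (0:ℝ) ⊆ ⋃ k : ℕ, Set.Ioc ((k:ℝ)*h) (((k:ℝ)+1)*h) := by
      intro t ht
      obtain ⟨j, hj1, hj2⟩ := cover_lemma 0 h t hh ht
      exact Set.mem_iUnion.2 ⟨j, by linarith [hj1], by linarith [hj2]⟩
    calc (∫⁻ t in Set.Ioi (0:ℝ),
          ENNReal.ofReal (1 / (2 * h ^ 2) * dist (u t) (χ ⌊t / h⌋₊) ^ 2))
        ≤ ∑' k : ℕ, ∫⁻ t in Set.Ioc ((k:ℝ)*h) (((k:ℝ)+1)*h),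
            ENNReal.ofReal (1 / (2 * h ^ 2) * dist (u t) (χ ⌊t / h⌋₊) ^ 2) :=
          le_trans (lintegral_mono_set hsub) (lintegral_iUnion_le _ _)
      _ ≤ ∑' k : ℕ, ENNReal.ofReal (E (χ k) - E (χ (k+1))) := ENNReal.tsum_le_tsum hBk
      _ ≤ ENNReal.ofReal (E (χ 0)) := by
          apply Summable.tsum_le_of_sum_range_le ENNReal.summable
          intro n
          rw [← ENNReal.ofReal_sum_of_nonneg (fun k _ => by linarith [hEdec k])]
          apply ENNReal.ofReal_le_ofReal
          calc ∑ k ∈ Finset.range n, (E (χ k) - E (χ (k+1)))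
              = E (χ 0) - E (χ n) := Finset.sum_range_sub' (fun m => E (χ m)) n
            _ ≤ E (χ 0) := by linarith [hE0 (χ n)]
  · -- (iii)
    intro t ht
    rw [hu]
    dsimp only
    split_ifs with hcase
    · exact le_refl _
    · push_neg at hcase
      exact hselE _ _ (by linarith)
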